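/- For every a ∈ (0,1) and every Δ ≥ 1 there exists δ > 0 such that for every η > 0 there exists n₀ with the following property: for all n ≥ n₀ and every connected graph G on vertex set {1,…,n} with maximum degree at most Δ, if R ~ G(n, n^{−a}/n) then with probability at least 1 − η the graph G* = G ∪ R has vertex expansion at least δ/(Δ³ · n^{a} · log n). -/

import Mathlib

open Real

/-- The Erdős–Rényi measure `G(n,p)`: the probability that the random graph lies in the
set `A` of graphs on `{1,…,n}`. -/
noncomputable def erProb (n : ℕ) (p : ℝ) (A : Set (SimpleGraph (Fin n))) : ℝ :=
  ∑ R : SimpleGraph (Fin n),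
    A.indicator (fun R => p ^ R.edgeSet.ncard * (1 - p) ^ (n.choose 2 - R.edgeSet.ncard)) R

/-- `vNbhd H S` is the external vertex neighborhood `N_H(S)`. -/
def vNbhd {V : Type*} (H : SimpleGraph V) (S : Set V) : Set V :=
  {v | v ∉ S ∧ ∃ u ∈ S, H.Adj u v}



section Chains

variable {V : Type*} {G : SimpleGraph V} {P Q : Set V} {x y z : V}

/-- A length-`m` chain from `x` to `y` all of whose vertices after the first lie in `P`. -/
def chainIn (G : SimpleGraph V) (P : Set V) (x y : V) (m : ℕ) : Prop :=
  ∃ f : ℕ → V, f 0 = x ∧ f m = y ∧ ∀ i < m, G.Adj (f i) (f (i + 1)) ∧ f (i + 1) ∈ P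

/-- Reachability within `P` (except possibly the first vertex). -/
def ReachIn (G : SimpleGraph V) (P : Set V) (x y : V) : Prop := ∃ m, chainIn G P x y m

/-- `P` is connected (within itself) in `G`. -/
def ConnIn (G : SimpleGraph V) (P : Set V) : Prop := ∀ x ∈ P, ∀ y ∈ P, ReachIn G P x y

lemma chainIn_zero_iff : chainIn G P x y 0 ↔ x = y := by
  constructor
  · rintro ⟨f, h0, hm, -⟩; rw [← h0, hm]
  · rintro rfl; exact ⟨fun _ => x, rfl, rfl, fun i hi => absurd hi (Nat.not_lt_zero i)⟩

lemma chainIn.refl : chainIn G P x x 0 := chainIn_zero_iff.2 rfl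

lemma reachIn_refl : ReachIn G P x x := ⟨0, chainIn.refl⟩

lemma chainIn.head {m : ℕ} (h : chainIn G P x y (m + 1)) :
    ∃ z, G.Adj x z ∧ z ∈ P ∧ chainIn G P z y m := by
  obtain ⟨f, h0, hm, hstep⟩ := h
  refine ⟨f 1, h0 ▸ (hstep 0 (Nat.succ_pos m)).1, (hstep 0 (Nat.succ_pos m)).2, fun i => f (i + 1), rfl, hm, fun i hi => ?_⟩
  exact hstep (i + 1) (by omega)

lemma chainIn.cons (ha : G.Adj x z) (hz : z ∈ P) {m : ℕ} (h : chainIn G P z y m) :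
    chainIn G P x y (m + 1) := by
  obtain ⟨f, h0, hm, hstep⟩ := h
  refine ⟨fun i => if i = 0 then x else f (i - 1), rfl, by simp [hm], fun i hi => ?_⟩
  rcases Nat.eq_zero_or_pos i with rfl | hpos
  · simpa [h0] using ⟨ha, hz⟩
  · have h1 : ¬ (i = 0) := by omega
    have h2 : ¬ (i + 1 = 0) := by omega
    simp only [h1, h2, if_false]
    have : i - 1 + 1 = i + 1 - 1 := by omega
    rw [show i + 1 - 1 = (i-1) + 1 by omega]
    exact hstep (i - 1) (by omega)

lemma chainIn.tail {m : ℕ} (h : chainIn G P x y m) (ha : G.Adj y z) (hz : z ∈ P) :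
    chainIn G P x z (m + 1) := by
  obtain ⟨f, h0, hm, hstep⟩ := h
  refine ⟨fun i => if i ≤ m then f i else z, by simp [h0], by simp, fun i hi => ?_⟩
  rcases Nat.lt_or_ge i m with hlt | hge
  · have h1 : i ≤ m := hlt.le
    have h2 : i + 1 ≤ m := hlt
    simp only [h1, h2, if_true]
    exact hstep i hlt
  · have h1 : i ≤ m := by omega
    have h2 : ¬ (i + 1 ≤ m) := by omega
    have h3 : i = m := by omega
    simp only [h1, if_true, h2, if_false]
    rw [h3, hm]; exact ⟨ha, hz⟩

lemma chainIn.init {m : ℕ} (h : chainIn G P x y (m + 1)) :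
    ∃ z, chainIn G P x z m ∧ G.Adj z y ∧ (z ∈ P ∨ z = x) := by
  obtain ⟨f, h0, hm, hstep⟩ := h
  refine ⟨f m, ⟨f, h0, rfl, fun i hi => hstep i (by omega)⟩, hm ▸ (hstep m (by omega)).1, ?_⟩
  rcases Nat.eq_zero_or_pos m with rfl | hpos
  · exact Or.inr h0
  · exact Or.inl (by simpa [Nat.sub_add_cancel hpos] using (hstep (m-1) (by omega)).2)

lemma reachIn_chainIn_trans {m : ℕ} : ∀ {y}, ReachIn G P x y → chainIn G P y z m → ReachIn G P x z := by
  induction m with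
  | zero =>
    intro y h1 hc
    rwa [← chainIn_zero_iff.1 hc]
  | succ m ih =>
    intro y h1 hc
    obtain ⟨w, haw, hwP, hc'⟩ := hc.head
    obtain ⟨m1, hc1⟩ := h1
    exact ih ⟨m1 + 1, hc1.tail haw hwP⟩ hc'

lemma reachIn_trans (h1 : ReachIn G P x y) (h2 : ReachIn G P y z) : ReachIn G P x z := by
  obtain ⟨m2, hc2⟩ := h2
  exact reachIn_chainIn_trans h1 hc2

lemma chainIn.symm (hx : x ∈ P) {m : ℕ} (h : chainIn G P x y m) : chainIn G P y x m := by
  obtain ⟨f, h0, hm, hstep⟩ := h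
  refine ⟨fun i => f (m - i), by simp [hm], by simp [h0], fun i hi => ?_⟩
  constructor
  · show G.Adj (f (m - i)) (f (m - (i + 1)))
    have := (hstep (m - i - 1) (by omega)).1
    rw [show m - i - 1 + 1 = m - i by omega] at this
    rw [show m - (i+1) = m - i - 1 by omega]
    exact this.symm
  · show f (m - (i + 1)) ∈ P
    rcases Nat.eq_zero_or_pos (m - (i + 1)) with hz | hpos
    · rw [hz, h0]; exact hx
    · have := (hstep (m - (i+1) - 1) (by omega)).2
      rwa [show m - (i+1) - 1 + 1 = m - (i+1) by omega] at this

lemma reachIn_symm (hx : x ∈ P) (h : ReachIn G P x y) : ReachIn G P y x := by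
  obtain ⟨m, hc⟩ := h; exact ⟨m, hc.symm hx⟩

/-- Crossing lemma: a chain within `P` from inside `U` to outside `U` passes through a
vertex of `P` outside `U` adjacent to a vertex of `U`. -/
lemma chainIn.crossing {U : Set V} {m : ℕ} (h : chainIn G P x y m) (hx : x ∈ U) (hy : y ∉ U) :
    ∃ z, z ∈ P ∧ z ∉ U ∧ ∃ u ∈ U, G.Adj u z := by
  induction m generalizing x with
  | zero => exact absurd (chainIn_zero_iff.1 h ▸ hx) hy
  | succ m ih =>
    obtain ⟨z, haz, hzP, hc⟩ := h.head
    by_cases hzU : z ∈ U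
    · exact ih hc hzU
    · exact ⟨z, hzP, hzU, x, hx, haz⟩

lemma chainIn.mono (hPQ : P ⊆ Q) {m : ℕ} (h : chainIn G P x y m) : chainIn G Q x y m := by
  obtain ⟨f, h0, hm, hstep⟩ := h
  exact ⟨f, h0, hm, fun i hi => ⟨(hstep i hi).1, hPQ (hstep i hi).2⟩⟩

lemma SimpleGraph.Walk.chainIn_univ {x y : V} (w : G.Walk x y) :
    chainIn G Set.univ x y w.length := by
  induction w with
  | nil => exact chainIn.refl
  | cons h p ih => exact ih.cons h (Set.mem_univ _)

lemma SimpleGraph.Reachable.reachIn_univ (h : G.Reachable x y) : ReachIn G Set.univ x y := by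
  obtain ⟨w⟩ := h; exact ⟨w.length, w.chainIn_univ⟩

end Chains
section BFS

open Finset

variable {V : Type*} [Fintype V] [DecidableEq V] {G : SimpleGraph V}

/-- BFS tree: a parent function and depth function on a connected finset. -/
lemma exists_bfs (G : SimpleGraph V) (W : Finset V) (hconn : ConnIn G ↑W) {r : V} (hr : r ∈ W) :
    ∃ (par : V → V) (dep : V → ℕ),
      ∀ v ∈ W, v ≠ r → G.Adj (par v) v ∧ par v ∈ W ∧ dep (par v) < dep v := by
  classical
  set dep : V → ℕ := fun v => if h : ∃ m, chainIn G (↑W) r v m then Nat.find h else 0 with hdep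
  have key : ∀ v ∈ W, v ≠ r → ∃ z, G.Adj z v ∧ z ∈ W ∧ dep z < dep v := by
    intro v hv hvr
    have h : ∃ m, chainIn G (↑W) r v m := hconn r hr v hv
    have hd : dep v = Nat.find h := by rw [hdep]; exact dif_pos h
    have hchain : chainIn G (↑W) r v (Nat.find h) := Nat.find_spec h
    have hpos : 0 < Nat.find h := by
      rcases Nat.eq_zero_or_pos (Nat.find h) with h0 | hp
      · exfalso
        have := Nat.find_spec h
        rw [h0] at this
        exact hvr (chainIn_zero_iff.1 this).symm
      · exact hp
    obtain ⟨m, hm⟩ : ∃ m, Nat.find h = m + 1 := ⟨Nat.find h - 1, by omega⟩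
    rw [hm] at hchain
    obtain ⟨z, hcz, hazv, hzmem⟩ := hchain.init
    have hzW : z ∈ W := by
      rcases hzmem with h' | h'
      · exact h'
      · rw [h']; exact hr
    have hz2 : ∃ m', chainIn G (↑W) r z m' := ⟨m, hcz⟩
    have hzle : dep z ≤ m := by
      rw [hdep]; simp only [dif_pos hz2]; exact Nat.find_le hcz
    refine ⟨z, hazv, hzW, ?_⟩
    rw [hd, hm]; omega
  refine ⟨fun v => if h : ∃ z, G.Adj z v ∧ z ∈ W ∧ dep z < dep v then Classical.choose h else v,
    dep, ?_⟩
  intro v hv hvr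
  have h := key v hv hvr
  simp only [dif_pos h]
  exact Classical.choose_spec h

variable (par : V → V) (W : Finset V) (r : V)

/-- Descendant relation for a parent function. -/
def desc (u v : V) : Prop :=
  Relation.ReflTransGen (fun a b => a ∈ W ∧ a ≠ r ∧ b = par a) u v

open Classical in
/-- The subtree rooted at `v`. -/
noncomputable def subT (v : V) : Finset V := W.filter (fun u => desc par W r u v)

open Classical in
/-- The children of `v`. -/
noncomputable def childs (v : V) : Finset V := W.filter (fun c => c ≠ r ∧ par c = v)

variable {par W r}

lemma mem_subT {u v : V} : u ∈ subT par W r v ↔ u ∈ W ∧ desc par W r u v := by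
  classical
  simp [subT]

lemma subT_subset {v : V} : subT par W r v ⊆ W := by
  intro u hu; exact (mem_subT.1 hu).1

lemma mem_subT_self {v : V} (hv : v ∈ W) : v ∈ subT par W r v :=
  mem_subT.2 ⟨hv, Relation.ReflTransGen.refl⟩

variable {dep : V → ℕ}
  (H : ∀ v ∈ W, v ≠ r → G.Adj (par v) v ∧ par v ∈ W ∧ dep (par v) < dep v)

include H

lemma dep_le_of_desc {u v : V} (h : desc par W r u v) : dep v ≤ dep u := by
  induction h with
  | refl => exact le_rfl
  | tail hab hrel ih =>
    obtain ⟨hbW, hbr, hc⟩ := hrel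
    have := (H _ hbW hbr).2.2
    rw [← hc] at this
    omega

lemma desc_root : ∀ d, ∀ u ∈ W, dep u ≤ d → desc par W r u r := by
  intro d
  induction d with
  | zero =>
    intro u hu hd
    by_cases h : u = r
    · rw [h]; exact Relation.ReflTransGen.refl
    · exfalso; have := (H u hu h).2.2; omega
  | succ d ih =>
    intro u hu hd
    by_cases h : u = r
    · rw [h]; exact Relation.ReflTransGen.refl
    · obtain ⟨-, hpW, hlt⟩ := H u hu h
      exact Relation.ReflTransGen.head ⟨hu, h, rfl⟩ (ih (par u) hpW (by omega))

lemma subT_root_eq : subT par W r r = W := by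
  apply Finset.Subset.antisymm subT_subset
  intro u hu
  exact mem_subT.2 ⟨hu, desc_root H (dep u) u hu le_rfl⟩

omit H

lemma subT_subset_insert {v : V} :
    subT par W r v ⊆ insert v ((childs par W r v).biUnion (subT par W r)) := by
  classical
  intro u hu
  obtain ⟨huW, hdesc⟩ := mem_subT.1 hu
  rcases Relation.ReflTransGen.cases_tail hdesc with h | ⟨c, huc, hcW, hcr, hcv⟩
  · rw [h]; exact Finset.mem_insert_self _ _
  · refine Finset.mem_insert_of_mem (Finset.mem_biUnion.2 ⟨c, ?_, mem_subT.2 ⟨huW, huc⟩⟩)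
    simp [childs, hcW, hcr, hcv.symm]

include H

lemma childs_subset_nbhd {v : V} : (childs par W r v : Set V) ⊆ G.neighborSet v := by
  classical
  intro c hc
  simp only [childs, Finset.coe_filter, Set.mem_setOf_eq] at hc
  obtain ⟨hcW, hcr, hcp⟩ := hc
  have := (H c hcW hcr).1
  rw [hcp] at this
  exact this

lemma subT_card_le {Δ k : ℕ} (hΔ : ∀ x : V, (G.neighborSet x).ncard ≤ Δ) {v : V}
    (hsmall : ∀ c ∈ childs par W r v, (subT par W r c).card ≤ k - 1) :
    (subT par W r v).card ≤ 1 + Δ * (k - 1) := by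
  classical
  have h1 : (subT par W r v).card ≤ 1 + ∑ c ∈ childs par W r v, (subT par W r c).card := by
    calc (subT par W r v).card ≤ (insert v ((childs par W r v).biUnion (subT par W r))).card :=
          Finset.card_le_card subT_subset_insert
      _ ≤ 1 + ((childs par W r v).biUnion (subT par W r)).card := by
          rw [add_comm]; exact Finset.card_insert_le _ _
      _ ≤ 1 + ∑ c ∈ childs par W r v, (subT par W r c).card := by
          gcongr
          exact Finset.card_biUnion_le
  have h2 : ∑ c ∈ childs par W r v, (subT par W r c).card ≤ (childs par W r v).card * (k - 1) :=
    Finset.sum_le_card_nsmul _ _ _ hsmall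
  have h3 : (childs par W r v).card ≤ Δ := by
    have := Set.ncard_le_ncard (childs_subset_nbhd (G := G) H (v := v)) (Set.toFinite _)
    rw [Set.ncard_coe_finset] at this
    exact this.trans (hΔ v)
  calc (subT par W r v).card ≤ 1 + (childs par W r v).card * (k-1) := h1.trans (by omega)
    _ ≤ 1 + Δ * (k - 1) := by
        have : (childs par W r v).card * (k-1) ≤ Δ * (k-1) := Nat.mul_le_mul_right _ h3
        omega

lemma reachIn_subT {v : V} : ∀ u ∈ subT par W r v, ReachIn G (↑(subT par W r v)) u v := by
  intro u hu
  obtain ⟨huW, hdesc⟩ := mem_subT.1 hu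
  clear hu huW
  induction hdesc using Relation.ReflTransGen.head_induction_on with
  | refl => exact reachIn_refl
  | head hrel hrtg ih =>
    rename_i a b
    obtain ⟨haW, har, hb⟩ := hrel
    have hadj : G.Adj a (par a) := ((H a haW har).1).symm
    have hbW : par a ∈ W := (H a haW har).2.1
    have hbmem : b ∈ subT par W r v := mem_subT.2 ⟨hb ▸ hbW, hrtg⟩
    have hadj' : G.Adj a b := hb ▸ hadj
    obtain ⟨m, hc⟩ := ih
    exact ⟨m + 1, hc.cons hadj' (by exact_mod_cast hbmem)⟩

lemma connIn_subT {v : V} : ConnIn G (↑(subT par W r v)) := by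
  intro x hx y hy
  have hx' : x ∈ subT par W r v := by exact_mod_cast hx
  have hy' : y ∈ subT par W r v := by exact_mod_cast hy
  exact reachIn_trans (reachIn_subT H x hx')
    (reachIn_symm (by exact_mod_cast hy') (reachIn_subT H y hy'))

lemma root_not_mem_subT {v : V} (hvr : v ≠ r) : r ∉ subT par W r v := by
  intro hmem
  obtain ⟨-, hdesc⟩ := mem_subT.1 hmem
  rcases Relation.ReflTransGen.cases_head hdesc with h | ⟨c, ⟨-, habs, -⟩, -⟩
  · exact hvr h.symm
  · exact habs rfl

lemma reachIn_compl {v : V} (hvr : v ≠ r) :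
    ∀ d, ∀ u ∈ W \ subT par W r v, dep u ≤ d → ReachIn G (↑(W \ subT par W r v)) u r := by
  intro d
  induction d with
  | zero =>
    intro u hu hd
    obtain ⟨huW, -⟩ := Finset.mem_sdiff.1 hu
    by_cases h : u = r
    · rw [h]; exact reachIn_refl
    · exfalso; have := (H u huW h).2.2; omega
  | succ d ih =>
    intro u hu hd
    obtain ⟨huW, hunot⟩ := Finset.mem_sdiff.1 hu
    by_cases h : u = r
    · rw [h]; exact reachIn_refl
    · obtain ⟨hadj, hpW, hlt⟩ := H u huW h
      have hpnot : par u ∉ subT par W r v := by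
        intro hmem
        obtain ⟨-, hdesc⟩ := mem_subT.1 hmem
        exact hunot (mem_subT.2 ⟨huW, Relation.ReflTransGen.head ⟨huW, h, rfl⟩ hdesc⟩)
      have hpmem : par u ∈ W \ subT par W r v := Finset.mem_sdiff.2 ⟨hpW, hpnot⟩
      obtain ⟨m, hc⟩ := ih (par u) hpmem (by omega)
      exact ⟨m + 1, hc.cons hadj.symm (by exact_mod_cast hpmem)⟩

lemma connIn_compl {v : V} (hvr : v ≠ r) : ConnIn G (↑(W \ subT par W r v)) := by
  intro x hx y hy
  have hx' : x ∈ W \ subT par W r v := by exact_mod_cast hx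
  have hy' : y ∈ W \ subT par W r v := by exact_mod_cast hy
  exact reachIn_trans (reachIn_compl H hvr (dep x) x hx' le_rfl)
    (reachIn_symm (by exact_mod_cast hy') (reachIn_compl H hvr (dep y) y hy' le_rfl))

end BFS

section Partition

open Finset

variable {V : Type*} [Fintype V] [DecidableEq V]

/-- Partition of a connected set into connected parts of controlled size. -/
lemma exists_conn_partition (G : SimpleGraph V) {Δ : ℕ} (hΔ1 : 1 ≤ Δ)
    (hΔ : ∀ v : V, (G.neighborSet v).ncard ≤ Δ) {k : ℕ} (hk : 1 ≤ k) :
    ∀ N : ℕ, ∀ W : Finset V, W.card ≤ N → ConnIn G ↑W → k ≤ W.card →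
    ∃ Pn : Finset (Finset V),
      (∀ P ∈ Pn, k ≤ P.card ∧ P.card ≤ (Δ + 1) * k ∧ P ⊆ W ∧ ConnIn G ↑P) ∧
      (∀ P ∈ Pn, ∀ Q ∈ Pn, P ≠ Q → Disjoint P Q) ∧
      Pn.biUnion id = W := by
  intro N
  induction N with
  | zero => intro W hN _ hkW; exfalso; omega
  | succ N ih =>
    intro W hWN hconn hkW
    by_cases hbig : W.card ≤ (Δ + 1) * k
    · refine ⟨{W}, ?_, ?_, ?_⟩
      · intro P hP
        rw [Finset.mem_singleton] at hP
        subst hP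
        exact ⟨hkW, hbig, Finset.Subset.refl _, hconn⟩
      · intro P hP Q hQ hne
        rw [Finset.mem_singleton] at hP hQ
        exact absurd (hP.trans hQ.symm) hne
      · simp
    · -- extraction case
      classical
      have hWne : W.Nonempty := Finset.card_pos.1 (by omega)
      obtain ⟨r, hr⟩ := hWne
      obtain ⟨par, dep, H⟩ := exists_bfs G W hconn hr
      set T := W.filter (fun v => k ≤ (subT par W r v).card) with hT
      have hrT : r ∈ T := by
        rw [hT, Finset.mem_filter]
        exact ⟨hr, by rw [subT_root_eq H]; exact hkW⟩
      obtain ⟨v, hvT, hvmax⟩ := T.exists_max_image dep ⟨r, hrT⟩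
      have hvW : v ∈ W := (Finset.mem_filter.1 hvT).1
      have hvk : k ≤ (subT par W r v).card := (Finset.mem_filter.1 hvT).2
      have hsmall : ∀ c ∈ childs par W r v, (subT par W r c).card ≤ k - 1 := by
        intro c hc
        simp only [childs, Finset.mem_filter] at hc
        obtain ⟨hcW, hcr, hcp⟩ := hc
        by_contra hcon
        have hck : k ≤ (subT par W r c).card := by omega
        have hcT : c ∈ T := by rw [hT, Finset.mem_filter]; exact ⟨hcW, hck⟩
        have := hvmax c hcT
        have hdlt : dep (par c) < dep c := (H c hcW hcr).2.2
        rw [hcp] at hdlt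
        omega
      have hcard : (subT par W r v).card ≤ 1 + Δ * (k - 1) :=
        subT_card_le H hΔ hsmall
      have hvr : v ≠ r := by
        intro h
        subst h
        rw [subT_root_eq H] at hcard
        obtain ⟨m, rfl⟩ : ∃ m, k = m + 1 := ⟨k-1, by omega⟩
        have e : (Δ+1)*(m+1) = Δ*(m+1-1) + (Δ+m+1) := by simp; ring
        omega
      set S := subT par W r v with hS
      have hSsub : S ⊆ W := subT_subset
      have hScard : S.card ≤ Δ * k := by
        obtain ⟨m, hm⟩ : ∃ m, k = m + 1 := ⟨k-1, by omega⟩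
        have e : Δ*k = Δ*(k-1) + Δ := by subst hm; rw [Nat.add_sub_cancel]; ring
        omega
      set W' := W \ S with hW'
      have hW'card : W'.card = W.card - S.card := Finset.card_sdiff_of_subset hSsub
      have hW'k : k ≤ W'.card := by
        have h1 : (Δ + 1) * k + 1 ≤ W.card := by omega
        have h2 : S.card ≤ Δ * k := hScard
        have e : (Δ+1)*k = Δ*k + k := by ring
        omega
      have hW'N : W'.card ≤ N := by
        have : 1 ≤ S.card := le_trans hk hvk
        omega
      have hW'conn : ConnIn G ↑W' := connIn_compl H hvr
      obtain ⟨Ps, hPsparts, hPsdisj, hPsun⟩ := ih W' hW'N hW'conn hW'k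
      refine ⟨insert S Ps, ?_, ?_, ?_⟩
      · intro P hP
        rcases Finset.mem_insert.1 hP with rfl | hP'
        · refine ⟨hvk, le_trans hScard (Nat.mul_le_mul_right k (Nat.le_succ Δ)), hSsub, connIn_subT H⟩
        · obtain ⟨h1, h2, h3, h4⟩ := hPsparts P hP'
          exact ⟨h1, h2, h3.trans (Finset.sdiff_subset), h4⟩
      · intro P hP Q hQ hne
        rcases Finset.mem_insert.1 hP with rfl | hP' <;>
          rcases Finset.mem_insert.1 hQ with rfl | hQ'
        · exact absurd rfl hne
        · exact (Disjoint.mono_left ((hPsparts _ hQ').2.2.1) Finset.sdiff_disjoint).symm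
        · exact Disjoint.mono_left ((hPsparts _ hP').2.2.1) Finset.sdiff_disjoint
        · exact hPsdisj P hP' Q hQ' hne
      · rw [Finset.biUnion_insert, hPsun]
        simp only [id]
        rw [hW']
        exact Finset.union_sdiff_of_subset hSsub

end Partition
section Prob

open Finset

variable {n : ℕ} {β : Type*} [DecidableEq β]

lemma sum_weight_one (s : Finset β) (p : ℝ) :
    ∑ F ∈ s.powerset, p ^ F.card * (1 - p) ^ (s.card - F.card) = 1 := by
  classical
  have h := Finset.prod_add (fun _ : β => p) (fun _ : β => 1 - p) s
  simp only [add_sub_cancel, Finset.prod_const_one, Finset.prod_const] at h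
  refine Eq.trans (Finset.sum_congr rfl ?_) h.symm
  intro F hF
  rw [Finset.card_sdiff_of_subset (Finset.mem_powerset.1 hF)]

lemma sum_weight_avoid (s E0 : Finset β) (hE0 : E0 ⊆ s) (p : ℝ) :
    ∑ F ∈ s.powerset.filter (fun F => Disjoint F E0),
        p ^ F.card * (1 - p) ^ (s.card - F.card) = (1 - p) ^ E0.card := by
  classical
  have hset : s.powerset.filter (fun F => Disjoint F E0) = (s \ E0).powerset := by
    ext F
    simp only [Finset.mem_filter, Finset.mem_powerset, Finset.subset_sdiff]
  rw [hset]
  have hcardE : E0.card ≤ s.card := Finset.card_le_card hE0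
  have hcard : s.card = E0.card + (s \ E0).card := by
    rw [Finset.card_sdiff_of_subset hE0]; omega
  calc ∑ F ∈ (s \ E0).powerset, p ^ F.card * (1 - p) ^ (s.card - F.card)
      = ∑ F ∈ (s \ E0).powerset,
          (1 - p) ^ E0.card * (p ^ F.card * (1 - p) ^ ((s \ E0).card - F.card)) := by
        apply Finset.sum_congr rfl
        intro F hF
        have hFs : F.card ≤ (s \ E0).card := Finset.card_le_card (Finset.mem_powerset.1 hF)
        rw [show s.card - F.card = E0.card + ((s \ E0).card - F.card) by omega, pow_add]
        ring
    _ = (1 - p) ^ E0.card := by rw [← Finset.mul_sum, sum_weight_one, mul_one]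

open Classical in
/-- The set of potential edges of a graph on `Fin n`. -/
noncomputable def allEdges (n : ℕ) : Finset (Sym2 (Fin n)) :=
  Finset.univ.filter (fun e => ¬ e.IsDiag)

lemma card_allEdges : (allEdges n).card = n.choose 2 := by
  classical
  have h1 : Fintype.card {e : Sym2 (Fin n) // ¬ e.IsDiag} = (Fintype.card (Fin n)).choose 2 :=
    Sym2.card_subtype_not_diag
  rw [Fintype.card_subtype, Fintype.card_fin] at h1
  rw [← h1, allEdges]

lemma sum_graphs_eq (f : SimpleGraph (Fin n) → ℝ) :
    ∑ R : SimpleGraph (Fin n), f R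
      = ∑ F ∈ (allEdges n).powerset, f (SimpleGraph.fromEdgeSet ↑F) := by
  classical
  refine Finset.sum_nbij' (i := fun R => (Set.toFinite R.edgeSet).toFinset)
    (j := fun F => SimpleGraph.fromEdgeSet ↑F) ?_ ?_ ?_ ?_ ?_
  · intro R _
    rw [Finset.mem_powerset]
    intro e he
    rw [Set.Finite.mem_toFinset] at he
    simp only [allEdges, Finset.mem_filter, Finset.mem_univ, true_and]
    exact R.not_isDiag_of_mem_edgeSet he
  · intro F _; exact Finset.mem_univ _
  · intro R _
    simp only [Set.Finite.coe_toFinset]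
    exact SimpleGraph.fromEdgeSet_edgeSet R
  · intro F hF
    rw [Finset.mem_powerset] at hF
    apply Finset.coe_injective
    rw [Set.Finite.coe_toFinset, SimpleGraph.edgeSet_fromEdgeSet]
    apply (_root_.sdiff_eq_self_iff_disjoint.trans disjoint_comm).2
    rw [Set.disjoint_left]
    intro e heF hediag
    have := hF heF
    simp only [allEdges, Finset.mem_filter] at this
    exact this.2 hediag
  · intro R _
    rw [Set.Finite.coe_toFinset, SimpleGraph.fromEdgeSet_edgeSet R]

lemma edgeSet_ncard_fromEdgeSet {F : Finset (Sym2 (Fin n))} (hF : F ∈ (allEdges n).powerset) :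
    (SimpleGraph.fromEdgeSet (↑F : Set (Sym2 (Fin n)))).edgeSet.ncard = F.card := by
  rw [Finset.mem_powerset] at hF
  have hdia : (↑F : Set (Sym2 (Fin n))) \ Sym2.diagSet = ↑F := by
    apply (_root_.sdiff_eq_self_iff_disjoint.trans disjoint_comm).2
    rw [Set.disjoint_left]
    intro e heF hediag
    have := hF heF
    simp only [allEdges, Finset.mem_filter] at this
    exact this.2 hediag
  rw [SimpleGraph.edgeSet_fromEdgeSet, hdia, Set.ncard_coe_finset]

/-- The weight function. -/
noncomputable def gWeight (n : ℕ) (p : ℝ) (R : SimpleGraph (Fin n)) : ℝ :=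
  p ^ R.edgeSet.ncard * (1 - p) ^ (n.choose 2 - R.edgeSet.ncard)

lemma erProb_def' (p : ℝ) (A : Set (SimpleGraph (Fin n))) :
    erProb n p A = ∑ R : SimpleGraph (Fin n), A.indicator (gWeight n p) R := rfl

lemma gWeight_nonneg {p : ℝ} (hp0 : 0 ≤ p) (hp1 : p ≤ 1) (R : SimpleGraph (Fin n)) :
    0 ≤ gWeight n p R :=
  mul_nonneg (pow_nonneg hp0 _) (pow_nonneg (by linarith) _)

lemma erProb_nonneg {p : ℝ} (hp0 : 0 ≤ p) (hp1 : p ≤ 1) (A : Set (SimpleGraph (Fin n))) :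
    0 ≤ erProb n p A := by
  rw [erProb_def']
  apply Finset.sum_nonneg
  intro R _
  exact Set.indicator_nonneg (fun x _ => gWeight_nonneg hp0 hp1 x) R

lemma erProb_mono {p : ℝ} (hp0 : 0 ≤ p) (hp1 : p ≤ 1) {A B : Set (SimpleGraph (Fin n))}
    (hAB : A ⊆ B) : erProb n p A ≤ erProb n p B := by
  rw [erProb_def', erProb_def']
  apply Finset.sum_le_sum
  intro R _
  exact Set.indicator_le_indicator_of_subset hAB (fun x => gWeight_nonneg hp0 hp1 x) R

lemma erProb_total (p : ℝ) :
    ∑ R : SimpleGraph (Fin n), gWeight n p R = 1 := by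
  rw [sum_graphs_eq (gWeight n p)]
  have h := sum_weight_one (allEdges n) p
  rw [card_allEdges] at h
  rw [← h]
  apply Finset.sum_congr rfl
  intro F hF
  rw [gWeight, edgeSet_ncard_fromEdgeSet hF]

lemma erProb_compl (p : ℝ) (A : Set (SimpleGraph (Fin n))) :
    erProb n p A + erProb n p Aᶜ = 1 := by
  rw [erProb_def', erProb_def', ← Finset.sum_add_distrib, ← erProb_total (n := n) p]
  apply Finset.sum_congr rfl
  intro R _
  classical
  by_cases h : R ∈ A
  · rw [Set.indicator_of_mem h, Set.indicator_of_notMem (by simpa using h), add_zero]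
  · rw [Set.indicator_of_notMem h, Set.indicator_of_mem (by simpa using h), zero_add]

lemma erProb_biUnion_le {p : ℝ} (hp0 : 0 ≤ p) (hp1 : p ≤ 1) {ι : Type*} (t : Finset ι)
    (A : ι → Set (SimpleGraph (Fin n))) :
    erProb n p (⋃ i ∈ t, A i) ≤ ∑ i ∈ t, erProb n p (A i) := by
  classical
  induction t using Finset.induction with
  | empty => simp [erProb_def']
  | insert _ _ hx ih =>
    rename_i a s
    rw [Finset.sum_insert hx]
    have hun : (⋃ i ∈ insert a s, A i) = A a ∪ ⋃ i ∈ s, A i := by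
      simp [Set.biUnion_insert]
    rw [hun]
    have hsub : erProb n p (A a ∪ ⋃ i ∈ s, A i) ≤ erProb n p (A a) + erProb n p (⋃ i ∈ s, A i) := by
      rw [erProb_def', erProb_def', erProb_def', ← Finset.sum_add_distrib]
      apply Finset.sum_le_sum
      intro R _
      by_cases h1 : R ∈ A a
      · rw [Set.indicator_of_mem h1]
        by_cases h2 : R ∈ A a ∪ ⋃ i ∈ s, A i
        · rw [Set.indicator_of_mem h2]
          have := Set.indicator_nonneg (fun x _ => gWeight_nonneg hp0 hp1 x) (s := ⋃ i ∈ s, A i) R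
          linarith
        · rw [Set.indicator_of_notMem h2]
          have := Set.indicator_nonneg (fun x _ => gWeight_nonneg hp0 hp1 x) (s := ⋃ i ∈ s, A i) R
          have := gWeight_nonneg (n := n) hp0 hp1 R
          linarith
      · by_cases h2 : R ∈ ⋃ i ∈ s, A i
        · rw [Set.indicator_of_mem (Set.mem_union_right _ h2), Set.indicator_of_notMem h1,
            Set.indicator_of_mem h2]
          linarith
        · have h3 : R ∉ A a ∪ ⋃ i ∈ s, A i := by
            intro hc
            rcases hc with hc | hc
            · exact h1 hc
            · exact h2 hc
          rw [Set.indicator_of_notMem h3, Set.indicator_of_notMem h1,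
            Set.indicator_of_notMem h2]
          linarith
    exact hsub.trans (by linarith [ih])

/-- The key probability estimate: the probability that there are no edges between
disjoint sets `S` and `W`. -/
lemma erProb_no_edges_le {p : ℝ} (hp0 : 0 ≤ p) (hp1 : p ≤ 1) (S W : Finset (Fin n))
    (hdisj : Disjoint S W) :
    erProb n p {R : SimpleGraph (Fin n) | ∀ s ∈ S, ∀ w ∈ W, ¬ R.Adj s w}
      ≤ (1 - p) ^ (S.card * W.card) := by
  classical
  set E0 : Finset (Sym2 (Fin n)) := (S ×ˢ W).image (fun q => s(q.1, q.2)) with hE0def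
  have hne : ∀ a ∈ S, ∀ b ∈ W, a ≠ b := by
    intro a ha b hb h
    exact Finset.disjoint_left.1 hdisj ha (h ▸ hb)
  have hE0sub : E0 ⊆ allEdges n := by
    intro e he
    rw [hE0def, Finset.mem_image] at he
    obtain ⟨⟨a, b⟩, hab, rfl⟩ := he
    rw [Finset.mem_product] at hab
    simp only [allEdges, Finset.mem_filter, Finset.mem_univ, true_and]
    rw [Sym2.mk_isDiag_iff]
    exact hne a hab.1 b hab.2
  have hE0card : E0.card = S.card * W.card := by
    rw [hE0def, Finset.card_image_of_injOn, Finset.card_product]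
    intro ⟨a, b⟩ hab ⟨c, d⟩ hcd h
    simp only [Finset.coe_product, Set.mem_prod] at hab hcd
    rw [Sym2.mk_eq_mk_iff] at h
    rcases h with h | h
    · exact h
    · exfalso
      rw [Prod.ext_iff] at h
      simp only [Prod.fst_swap, Prod.snd_swap] at h
      exact hne a hab.1 d hcd.2 h.1
  rw [erProb_def', sum_graphs_eq]
  have hle : ∀ F ∈ (allEdges n).powerset,
      Set.indicator {R : SimpleGraph (Fin n) | ∀ s ∈ S, ∀ w ∈ W, ¬ R.Adj s w} (gWeight n p)
        (SimpleGraph.fromEdgeSet ↑F)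
      ≤ (if Disjoint F E0 then p ^ F.card * (1 - p) ^ (n.choose 2 - F.card) else 0) := by
    intro F hF
    by_cases hmem : SimpleGraph.fromEdgeSet (↑F : Set (Sym2 (Fin n)))
        ∈ {R : SimpleGraph (Fin n) | ∀ s ∈ S, ∀ w ∈ W, ¬ R.Adj s w}
    · rw [Set.indicator_of_mem hmem]
      have hdisjF : Disjoint F E0 := by
        rw [Finset.disjoint_left]
        intro e heF heE0
        rw [hE0def, Finset.mem_image] at heE0
        obtain ⟨⟨a, b⟩, hab, rfl⟩ := heE0
        rw [Finset.mem_product] at hab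
        apply hmem a hab.1 b hab.2
        rw [SimpleGraph.fromEdgeSet_adj]
        exact ⟨heF, hne a hab.1 b hab.2⟩
      rw [if_pos hdisjF, gWeight, edgeSet_ncard_fromEdgeSet hF]
    · rw [Set.indicator_of_notMem hmem]
      split
      · exact mul_nonneg (pow_nonneg hp0 _) (pow_nonneg (by linarith) _)
      · exact le_refl 0
  calc ∑ F ∈ (allEdges n).powerset,
        Set.indicator {R : SimpleGraph (Fin n) | ∀ s ∈ S, ∀ w ∈ W, ¬ R.Adj s w} (gWeight n p)
          (SimpleGraph.fromEdgeSet ↑F)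
      ≤ ∑ F ∈ (allEdges n).powerset,
          (if Disjoint F E0 then p ^ F.card * (1 - p) ^ (n.choose 2 - F.card) else 0) :=
        Finset.sum_le_sum hle
    _ = ∑ F ∈ (allEdges n).powerset.filter (fun F => Disjoint F E0),
          p ^ F.card * (1 - p) ^ (n.choose 2 - F.card) := (Finset.sum_filter _ _).symm
    _ = (1 - p) ^ E0.card := by
        rw [← card_allEdges (n := n)]
        exact sum_weight_avoid (allEdges n) E0 hE0sub p
    _ = (1 - p) ^ (S.card * W.card) := by rw [hE0card]

end Prob

section Main

open Finset Real

variable {n : ℕ}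

open Classical in
/-- Finset version of the external neighborhood. -/
noncomputable def NBF {n : ℕ} (H : SimpleGraph (Fin n)) (U : Finset (Fin n)) : Finset (Fin n) :=
  Finset.univ.filter (fun v => v ∉ U ∧ ∃ u ∈ U, H.Adj u v)

lemma mem_NBF {H : SimpleGraph (Fin n)} {U : Finset (Fin n)} {v : Fin n} :
    v ∈ NBF H U ↔ v ∉ U ∧ ∃ u ∈ U, H.Adj u v := by
  classical
  simp [NBF]

lemma vNbhd_ncard_eq (H : SimpleGraph (Fin n)) (U : Finset (Fin n)) :
    (vNbhd H ↑U).ncard = (NBF H U).card := by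
  classical
  have h : vNbhd H ↑U = ↑(NBF H U) := by
    ext v
    simp [vNbhd, mem_NBF]
  rw [h, Set.ncard_coe_finset]

lemma sum_halves (m : ℕ) : ∑ j ∈ Finset.Icc 1 m, ((1:ℝ)/2)^j ≤ 1 := by
  have key : ∀ m : ℕ, ∑ j ∈ Finset.Icc 1 m, ((1:ℝ)/2)^j ≤ 1 - (1/2)^m := by
    intro m
    induction m with
    | zero => simp
    | succ m ih =>
      rw [show Finset.Icc 1 (m+1) = insert (m+1) (Finset.Icc 1 m) by
        ext x; simp only [Finset.mem_insert, Finset.mem_Icc]; omega]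
      rw [Finset.sum_insert (by simp)]
      have h : ((1:ℝ)/2)^(m+1) ≤ (1/2)^m - (1/2)^(m+1) := by
        rw [pow_succ]
        nlinarith [pow_pos (by norm_num : (0:ℝ) < 1/2) m]
      linarith
  have h2 : (0:ℝ) < (1/2)^m := pow_pos (by norm_num) m
  linarith [key m]

/-- The index data for the union bound: a family `A` of pieces inside the bad set, a family
`B` of pieces touching its neighborhood, and a large set `W` avoiding everything. -/
def IdxP (n k : ℕ) (Pn : Finset (Finset (Fin n)))
    (x : Finset (Finset (Fin n)) × Finset (Finset (Fin n)) × Finset (Fin n)) : Prop :=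
  x.1 ⊆ Pn ∧ x.2.1 ⊆ Pn ∧ 1 ≤ x.1.card ∧ x.2.1.card ≤ x.1.card ∧
  x.2.2 ⊆ Finset.univ \ ((x.1 ∪ x.2.1).biUnion id) ∧
  x.2.2.card = n - ((x.1 ∪ x.2.1).biUnion id).card - x.1.card ∧
  4 * ((x.1 ∪ x.2.1).biUnion id).card ≤ 3 * n ∧
  2 * (x.1.card * k) ≤ n ∧ Disjoint (x.1.biUnion id) x.2.2

/-- The event that there are no random edges between `⋃ x.1` and `x.2.2`. -/
def EV (n : ℕ) (x : Finset (Finset (Fin n)) × Finset (Finset (Fin n)) × Finset (Fin n)) :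
    Set (SimpleGraph (Fin n)) :=
  {R | ∀ s ∈ x.1.biUnion id, ∀ w ∈ x.2.2, ¬ R.Adj s w}

set_option maxHeartbeats 1000000 in
theorem vertex_expansion_of_perturbed_subconstant :
    ∀ a : ℝ, 0 < a → a < 1 → ∀ Δ : ℕ, 1 ≤ Δ → ∃ δ : ℝ, 0 < δ ∧
      ∀ η : ℝ, 0 < η → ∃ n₀ : ℕ, ∀ n : ℕ, n₀ ≤ n →
        ∀ G : SimpleGraph (Fin n), G.Connected →
          (∀ v : Fin n, (G.neighborSet v).ncard ≤ Δ) →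
          1 - η ≤ erProb n ((n : ℝ) ^ (-a) / n)
            {R | ∀ U : Set (Fin n), U.Nonempty → (U.ncard : ℝ) ≤ n / 2 →
              δ / ((Δ : ℝ) ^ 3 * (n : ℝ) ^ a * Real.log n) * U.ncard
                ≤ ((vNbhd (G ⊔ R) U).ncard : ℝ)} := by
  classical
  intro a ha0 ha1 Δ hΔ1
  have hΔR : (1:ℝ) ≤ (Δ:ℝ) := by exact_mod_cast hΔ1
  refine ⟨(Δ:ℝ)^2/512, by positivity, ?_⟩
  intro η hη
  set ε : ℝ := (1 - a)/2 with hεdef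
  have hεpos : 0 < ε := by rw [hεdef]; linarith
  have h1a : (0:ℝ) < 1 - a := by linarith
  refine ⟨max (max (⌈((256:ℝ)/(1-a)) ^ ((2:ℝ)/(1-a))⌉₊ + 3) 3) (⌈1/η⌉₊ + 1), ?_⟩
  intro n hn G hGconn hGdeg
  have hn3 : 3 ≤ n := le_trans (le_max_of_le_left (le_max_right _ 3)) hn
  have hnR : (3:ℝ) ≤ (n:ℝ) := by exact_mod_cast hn3
  have hnpos : (0:ℝ) < n := by linarith
  have hn1 : (1:ℝ) ≤ n := by linarith
  have hn2 : (2:ℝ) ≤ n := by linarith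
  have hn0 : 0 < n := by omega
  have hna1 : (1:ℝ) ≤ (n:ℝ)^a := by
    have := Real.rpow_le_rpow_of_exponent_le hn1 ha0.le
    rwa [Real.rpow_zero] at this
  have hnapos : (0:ℝ) < (n:ℝ)^a := by linarith
  have hlog1 : (1:ℝ) ≤ Real.log n := by
    rw [Real.le_log_iff_exp_le hnpos]
    have h1 : Real.exp 1 < 2.7182818286 := Real.exp_one_lt_d9
    linarith
  have hlogpos : (0:ℝ) < Real.log n := by linarith
  -- largeness : 128 n^a log n ≤ n
  have hbig : 128 * (n:ℝ)^a * Real.log n ≤ n := by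
    have hAn : (((256:ℝ)/(1-a)) ^ ((2:ℝ)/(1-a))) ≤ n := by
      have h0 : ⌈((256:ℝ)/(1-a)) ^ ((2:ℝ)/(1-a))⌉₊ + 3 ≤ n :=
        le_trans (le_max_of_le_left (le_max_left _ _)) hn
      have h1 : (⌈((256:ℝ)/(1-a)) ^ ((2:ℝ)/(1-a))⌉₊ : ℝ) ≤ n := by
        have h2 : ((⌈((256:ℝ)/(1-a)) ^ ((2:ℝ)/(1-a))⌉₊ + 3 : ℕ) : ℝ) ≤ n := by exact_mod_cast h0
        push_cast at h2
        linarith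
      exact le_trans (Nat.le_ceil _) h1
    have hB1 : (0:ℝ) ≤ 256/(1-a) := by positivity
    have hexp : (((256:ℝ)/(1-a)) ^ ((2:ℝ)/(1-a))) ^ ε = 256/(1-a) := by
      rw [← Real.rpow_mul hB1]
      have he : ((2:ℝ)/(1-a)) * ε = 1 := by
        rw [hεdef]; field_simp
      rw [he, Real.rpow_one]
    have hB : 256/(1-a) ≤ (n:ℝ)^ε := by
      calc (256:ℝ)/(1-a) = (((256:ℝ)/(1-a)) ^ ((2:ℝ)/(1-a))) ^ ε := hexp.symm
        _ ≤ (n:ℝ)^ε := Real.rpow_le_rpow (Real.rpow_nonneg hB1 _) hAn hεpos.le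
    have hlogn : Real.log n ≤ (n:ℝ)^ε / ε := Real.log_natCast_le_rpow_div n hεpos
    have hstep1 : 128 * (n:ℝ)^a * Real.log n ≤ (128/ε) * ((n:ℝ)^a * (n:ℝ)^ε) := by
      have h3 := mul_le_mul_of_nonneg_left hlogn (by positivity : (0:ℝ) ≤ 128 * (n:ℝ)^a)
      calc 128 * (n:ℝ)^a * Real.log n = (128 * (n:ℝ)^a) * Real.log n := by ring
        _ ≤ (128 * (n:ℝ)^a) * ((n:ℝ)^ε/ε) := h3
        _ = (128/ε) * ((n:ℝ)^a * (n:ℝ)^ε) := by field_simp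
    have h128 : (128:ℝ)/ε = 256/(1-a) := by
      rw [hεdef, div_div_eq_mul_div]; norm_num
    have hcomb : (n:ℝ)^a * (n:ℝ)^ε = (n:ℝ)^(a+ε) := (Real.rpow_add hnpos a ε).symm
    have hfin : (256/(1-a)) * (n:ℝ)^(a+ε) ≤ (n:ℝ)^ε * (n:ℝ)^(a+ε) :=
      mul_le_mul_of_nonneg_right hB (Real.rpow_nonneg hnpos.le _)
    have hfin2 : (n:ℝ)^ε * (n:ℝ)^(a+ε) = n := by
      rw [← Real.rpow_add hnpos]
      have : ε + (a + ε) = 1 := by rw [hεdef]; ring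
      rw [this, Real.rpow_one]
    calc 128 * (n:ℝ)^a * Real.log n ≤ (128/ε) * ((n:ℝ)^a * (n:ℝ)^ε) := hstep1
      _ = (256/(1-a)) * (n:ℝ)^(a+ε) := by rw [h128, hcomb]
      _ ≤ (n:ℝ)^ε * (n:ℝ)^(a+ε) := hfin
      _ = n := hfin2
  -- the block size k
  set k : ℕ := ⌈(64:ℝ) * (n:ℝ)^a * Real.log n⌉₊ with hkdef
  have hk64 : (64:ℝ) * (n:ℝ)^a * Real.log n ≤ k := Nat.le_ceil _
  have h64pos : (1:ℝ) ≤ 64 * (n:ℝ)^a * Real.log n := by nlinarith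
  have hk128 : (k:ℝ) ≤ 128 * (n:ℝ)^a * Real.log n := by
    have h1 : (k:ℝ) < 64 * (n:ℝ)^a * Real.log n + 1 :=
      Nat.ceil_lt_add_one (by positivity)
    nlinarith
  have hkn : k ≤ n := by
    have : (k:ℝ) ≤ n := le_trans hk128 hbig
    exact_mod_cast this
  have hk32 : 32 ≤ k := by
    have h1 : (32:ℝ) ≤ 64 * (n:ℝ)^a * Real.log n := by nlinarith
    have : (32:ℝ) ≤ (k:ℝ) := le_trans h1 hk64
    exact_mod_cast this
  have hk1 : 1 ≤ k := by omega
  -- probability p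
  have hp0 : 0 ≤ (n:ℝ)^(-a)/n := div_nonneg (Real.rpow_nonneg hnpos.le _) hnpos.le
  have hp1 : (n:ℝ)^(-a)/n ≤ 1 := by
    rw [div_le_one hnpos]
    have h1 : (n:ℝ)^(-a) ≤ 1 := Real.rpow_le_one_of_one_le_of_nonpos hn1 (by linarith)
    linarith
  -- the expansion constant
  set cc : ℝ := (Δ:ℝ)^2/512 / ((Δ:ℝ)^3 * (n:ℝ)^a * Real.log n) with hccdef
  have hΔpos : (0:ℝ) < (Δ:ℝ) := by linarith
  have hccpos : 0 < cc := by rw [hccdef]; positivity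
  have hck : cc * (4*(Δ:ℝ)*k) ≤ 1 := by
    have heq : cc * (4*(Δ:ℝ)*k) = (k:ℝ)/(128 * (n:ℝ)^a * Real.log n) := by
      rw [hccdef]
      field_simp
      ring
    rw [heq, div_le_one (by positivity)]
    exact hk128
  -- the partition
  have hconnU : ConnIn G ↑(Finset.univ : Finset (Fin n)) := by
    intro x _ y _
    have hreach := (hGconn.preconnected x y).reachIn_univ
    obtain ⟨m, hc⟩ := hreach
    exact ⟨m, hc.mono (by rw [Finset.coe_univ])⟩
  obtain ⟨Pn, hPparts, hPdisj, hPun⟩ :=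
    exists_conn_partition G hΔ1 hGdeg hk1 n Finset.univ
      (by rw [Finset.card_univ, Fintype.card_fin]) hconnU
      (by rw [Finset.card_univ, Fintype.card_fin]; exact hkn)
  have hPsize : ∀ P ∈ Pn, k ≤ P.card ∧ P.card ≤ 2*Δ*k := by
    intro P hP
    refine ⟨(hPparts P hP).1, le_trans (hPparts P hP).2.1 ?_⟩
    exact Nat.mul_le_mul_right k (by omega)
  have hM : Pn.card ≤ n := by
    have h1 : Pn.card * 1 ≤ ∑ P ∈ Pn, P.card := by
      simpa using Finset.card_nsmul_le_sum Pn (fun P => P.card) 1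
        (fun P hP => (hPparts P hP).1.trans' hk1)
    have h2 : ∑ P ∈ Pn, P.card = n := by
      have h3 := Finset.card_biUnion (t := id) (s := Pn)
        (fun P hP Q hQ hne => hPdisj P hP Q hQ hne)
      rw [hPun, Finset.card_univ, Fintype.card_fin] at h3
      simpa using h3.symm
    omega
  set Idx : Finset (Finset (Finset (Fin n)) × Finset (Finset (Fin n)) × Finset (Fin n)) :=
    Finset.univ.filter (IdxP n k Pn) with hIdxdef
  -- ======== probability of each event ========
  have probEV : ∀ x, IdxP n k Pn x →
      erProb n ((n:ℝ)^(-a)/n) (EV n x) ≤ ((n:ℝ)^(8*x.1.card))⁻¹ := by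
    intro x hx
    obtain ⟨hxA, hxB, hxj1, hxbj, hxWsub, hxWcard, hxZ3, hx2jk, hxdisj⟩ := hx
    have h1 : erProb n ((n:ℝ)^(-a)/n) (EV n x)
        ≤ (1 - (n:ℝ)^(-a)/n) ^ ((x.1.biUnion id).card * x.2.2.card) :=
      erProb_no_edges_le hp0 hp1 _ _ hxdisj
    have hSk : x.1.card * k ≤ (x.1.biUnion id).card := by
      have he : (x.1.biUnion id).card = ∑ P ∈ x.1, P.card :=
        Finset.card_biUnion (fun P hP Q hQ hne => hPdisj P (hxA hP) Q (hxA hQ) hne)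
      have h2 : x.1.card * k ≤ ∑ P ∈ x.1, P.card := by
        simpa using Finset.card_nsmul_le_sum x.1 (fun P => P.card) k
          (fun P hP => (hPsize P (hxA hP)).1)
      omega
    have hj32 : 32 * x.1.card ≤ x.1.card * k := by
      rw [mul_comm]
      exact Nat.mul_le_mul_left x.1.card hk32
    have h64j : 64 * x.1.card ≤ n := by
      have h3 : 2 * (32 * x.1.card) ≤ 2 * (x.1.card * k) := by omega
      omega
    have hW8 : n ≤ 8 * x.2.2.card := by omega
    -- real estimates
    have hkn' : (64:ℝ) * Real.log n ≤ (k:ℝ) * (n:ℝ)^(-a) := by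
      have h2 : (0:ℝ) ≤ (n:ℝ)^(-a) := Real.rpow_nonneg hnpos.le _
      have h3 := mul_le_mul_of_nonneg_right hk64 h2
      have hprod : (n:ℝ)^a * (n:ℝ)^(-a) = 1 := by
        rw [← Real.rpow_add hnpos]; simp
      calc (64:ℝ) * Real.log n = 64 * (n:ℝ)^a * Real.log n * (n:ℝ)^(-a) := by
            rw [show (64:ℝ) * (n:ℝ)^a * Real.log n * (n:ℝ)^(-a)
                = 64 * Real.log n * ((n:ℝ)^a * (n:ℝ)^(-a)) from by ring, hprod, mul_one]
        _ ≤ (k:ℝ) * (n:ℝ)^(-a) := h3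
    have hS' : ((x.1.card * k : ℕ) : ℝ) ≤ ((x.1.biUnion id).card : ℝ) := by exact_mod_cast hSk
    have hW' : (n:ℝ)/8 ≤ (x.2.2.card:ℝ) := by
      have h4 : (n:ℝ) ≤ 8*(x.2.2.card:ℝ) := by exact_mod_cast hW8
      linarith
    have hpm : (8*(x.1.card:ℝ)) * Real.log n
        ≤ ((n:ℝ)^(-a)/n) * (((x.1.biUnion id).card:ℝ) * (x.2.2.card:ℝ)) := by
      have hstep : (8*(x.1.card:ℝ)) * Real.log n
          ≤ ((n:ℝ)^(-a)/n) * (((x.1.card * k : ℕ):ℝ) * ((n:ℝ)/8)) := by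
        have hc1 : (8*(x.1.card:ℝ)) * Real.log n = (x.1.card:ℝ) * (64 * Real.log n) / 8 := by
          ring
        have hc2 : ((n:ℝ)^(-a)/n) * (((x.1.card * k : ℕ):ℝ) * ((n:ℝ)/8))
            = (x.1.card:ℝ) * ((k:ℝ) * (n:ℝ)^(-a)) / 8 := by
          push_cast
          field_simp
        rw [hc1, hc2]
        have h5 := mul_le_mul_of_nonneg_left hkn'
          (Nat.cast_nonneg x.1.card : (0:ℝ) ≤ (x.1.card:ℝ))
        linarith
      refine hstep.trans ?_
      apply mul_le_mul_of_nonneg_left _ hp0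
      exact mul_le_mul hS' hW' (by positivity)
        (Nat.cast_nonneg _ : (0:ℝ) ≤ ((x.1.biUnion id).card : ℝ))
    have h2 : (1 - (n:ℝ)^(-a)/n) ^ ((x.1.biUnion id).card * x.2.2.card)
        ≤ Real.exp (-((n:ℝ)^(-a)/n)) ^ ((x.1.biUnion id).card * x.2.2.card) := by
      apply pow_le_pow_left₀ (by linarith)
      have := Real.add_one_le_exp (-((n:ℝ)^(-a)/n))
      linarith
    rw [← Real.exp_nat_mul] at h2
    have h3 : Real.exp ((((x.1.biUnion id).card * x.2.2.card : ℕ):ℝ) * (-((n:ℝ)^(-a)/n)))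
        ≤ Real.exp (-((8*(x.1.card:ℝ)) * Real.log n)) := by
      apply Real.exp_le_exp.2
      have hc3 : (((x.1.biUnion id).card * x.2.2.card : ℕ):ℝ)
          = ((x.1.biUnion id).card:ℝ) * (x.2.2.card:ℝ) := by push_cast; ring
      rw [hc3]
      nlinarith [hpm]
    have h4 : Real.exp (-((8*(x.1.card:ℝ)) * Real.log n)) = ((n:ℝ)^(8*x.1.card))⁻¹ := by
      rw [Real.exp_neg]
      congr 1
      rw [show (8*(x.1.card:ℝ)) * Real.log n = ((8*x.1.card : ℕ):ℝ) * Real.log n from by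
        push_cast; ring]
      rw [← Real.log_pow, Real.exp_log (by positivity)]
    calc erProb n ((n:ℝ)^(-a)/n) (EV n x)
        ≤ (1 - (n:ℝ)^(-a)/n) ^ ((x.1.biUnion id).card * x.2.2.card) := h1
      _ ≤ Real.exp ((((x.1.biUnion id).card * x.2.2.card : ℕ):ℝ) * (-((n:ℝ)^(-a)/n))) := h2
      _ ≤ Real.exp (-((8*(x.1.card:ℝ)) * Real.log n)) := h3
      _ = ((n:ℝ)^(8*x.1.card))⁻¹ := h4
  -- ======== counting ========
  have countj : ∀ j : ℕ, 1 ≤ j → (Idx.filter (fun x => x.1.card = j)).card ≤ n^(4*j) := by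
    intro j hj
    set Pairs := (Pn.powersetCard j) ×ˢ (Pn.powerset.filter (fun B => B.card ≤ j)) with hPairsdef
    have hsub : Idx.filter (fun x => x.1.card = j) ⊆
        Pairs.biUnion (fun pr =>
          ((Finset.univ \ ((pr.1 ∪ pr.2).biUnion id)).powersetCard
            (n - ((pr.1 ∪ pr.2).biUnion id).card - j)).image (fun W => (pr.1, pr.2, W))) := by
      intro x hx
      obtain ⟨A, B, W⟩ := x
      obtain ⟨hxI, hxj⟩ := Finset.mem_filter.1 hx
      have hP := (Finset.mem_filter.1 hxI).2
      obtain ⟨h1, h2, h3, h4, h5, h6, h7, h8, h9⟩ := hP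
      simp only at hxj h1 h2 h3 h4 h5 h6
      apply Finset.mem_biUnion.2
      refine ⟨(A, B), ?_, ?_⟩
      · rw [hPairsdef, Finset.mem_product]
        refine ⟨Finset.mem_powersetCard.2 ⟨h1, hxj⟩,
          Finset.mem_filter.2 ⟨Finset.mem_powerset.2 h2, ?_⟩⟩
        rw [← hxj]; exact h4
      · apply Finset.mem_image.2
        refine ⟨W, ?_, rfl⟩
        apply Finset.mem_powersetCard.2
        exact ⟨h5, by rw [h6, hxj]⟩
    have himg : ∀ pr ∈ Pairs,
        (((Finset.univ \ ((pr.1 ∪ pr.2).biUnion id)).powersetCard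
          (n - ((pr.1 ∪ pr.2).biUnion id).card - j)).image
            (fun W => (pr.1, pr.2, W))).card ≤ n^j := by
      intro pr _
      set Zc := ((pr.1 ∪ pr.2).biUnion id).card
      calc (((Finset.univ \ ((pr.1 ∪ pr.2).biUnion id)).powersetCard (n - Zc - j)).image
              (fun W => (pr.1, pr.2, W))).card
          ≤ ((Finset.univ \ ((pr.1 ∪ pr.2).biUnion id)).powersetCard (n - Zc - j)).card :=
            Finset.card_image_le
        _ = (Finset.univ \ ((pr.1 ∪ pr.2).biUnion id)).card.choose (n - Zc - j) := by
            rw [Finset.card_powersetCard]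
        _ ≤ n^j := by
            have hN' : (Finset.univ \ ((pr.1 ∪ pr.2).biUnion id)).card = n - Zc := by
              rw [Finset.card_sdiff_of_subset (Finset.subset_univ _), Finset.card_univ, Fintype.card_fin]
            rw [hN']
            have hnzj : n - Zc - j = (n - Zc) - j := by omega
            rw [hnzj]
            by_cases hjN : j ≤ n - Zc
            · rw [Nat.choose_symm hjN]
              exact (Nat.choose_le_pow _ _).trans (Nat.pow_le_pow_left (by omega) _)
            · have hz : n - Zc - j = 0 := by omega
              rw [hz]
              simpa using Nat.one_le_pow j n (by omega)
    have hj1n : j + 1 ≤ n^j := by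
      have h1 : j + 1 ≤ 2^j := Nat.lt_two_pow_self
      exact h1.trans (Nat.pow_le_pow_left (by omega) j)
    have hPairscard : Pairs.card ≤ n^j * (n^j * n^j) := by
      rw [hPairsdef, Finset.card_product]
      apply Nat.mul_le_mul
      · rw [Finset.card_powersetCard]
        exact (Nat.choose_le_pow _ _).trans (Nat.pow_le_pow_left hM _)
      · have hsub2 : Pn.powerset.filter (fun B => B.card ≤ j)
            ⊆ (Finset.range (j+1)).biUnion (fun b => Pn.powersetCard b) := by
          intro B hB
          obtain ⟨hBp, hBj⟩ := Finset.mem_filter.1 hB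
          exact Finset.mem_biUnion.2 ⟨B.card, Finset.mem_range.2 (by omega),
            Finset.mem_powersetCard.2 ⟨Finset.mem_powerset.1 hBp, rfl⟩⟩
        calc (Pn.powerset.filter (fun B => B.card ≤ j)).card
            ≤ ∑ b ∈ Finset.range (j+1), (Pn.powersetCard b).card :=
              (Finset.card_le_card hsub2).trans Finset.card_biUnion_le
          _ ≤ ∑ _b ∈ Finset.range (j+1), n^j := by
              apply Finset.sum_le_sum
              intro b hb
              rw [Finset.card_powersetCard]
              refine (Nat.choose_le_pow _ _).trans ?_
              refine (Nat.pow_le_pow_left hM b).trans ?_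
              exact Nat.pow_le_pow_right (by omega) (by
                exact Nat.lt_succ_iff.1 (Finset.mem_range.1 hb))
          _ = (j+1) * n^j := by rw [Finset.sum_const, Finset.card_range, smul_eq_mul]
          _ ≤ n^j * n^j := Nat.mul_le_mul_right _ hj1n
    calc (Idx.filter (fun x => x.1.card = j)).card
        ≤ ∑ pr ∈ Pairs, (((Finset.univ \ ((pr.1 ∪ pr.2).biUnion id)).powersetCard
            (n - ((pr.1 ∪ pr.2).biUnion id).card - j)).image (fun W => (pr.1, pr.2, W))).card :=
          (Finset.card_le_card hsub).trans Finset.card_biUnion_le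
      _ ≤ ∑ _pr ∈ Pairs, n^j := Finset.sum_le_sum himg
      _ = Pairs.card * n^j := by rw [Finset.sum_const, smul_eq_mul]
      _ ≤ (n^j * (n^j * n^j)) * n^j := Nat.mul_le_mul_right _ hPairscard
      _ = n^(4*j) := by
          rw [show 4*j = j + (j + (j + j)) from by ring, pow_add, pow_add, pow_add]
          ring
  -- ======== covering ========
  have cover : ∀ R : SimpleGraph (Fin n),
      (∃ U : Set (Fin n), U.Nonempty ∧ (U.ncard:ℝ) ≤ (n:ℝ)/2 ∧
        ((vNbhd (G ⊔ R) U).ncard : ℝ) < cc * U.ncard) →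
      ∃ x, IdxP n k Pn x ∧ R ∈ EV n x := by
    intro R ⟨U, hUne, hU2, hUbad⟩
    have hUfin : U.Finite := Set.toFinite U
    set UF := hUfin.toFinset with hUFdef
    have hUFcoe : (↑UF : Set (Fin n)) = U := hUfin.coe_toFinset
    have hUcard : U.ncard = UF.card := by rw [← hUFcoe, Set.ncard_coe_finset]
    set NS := NBF (G ⊔ R) UF with hNSdef
    have hNScard : (vNbhd (G ⊔ R) U).ncard = NS.card := by
      rw [← hUFcoe]; exact vNbhd_ncard_eq _ _
    set NG := NBF G UF with hNGdef
    have hNGsub : NG ⊆ NS := by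
      intro v hv
      obtain ⟨hv1, u, hu, hadj⟩ := mem_NBF.1 hv
      exact mem_NBF.2 ⟨hv1, u, hu, Or.inl hadj⟩
    have hUFne : UF.Nonempty := by
      obtain ⟨x, hx⟩ := hUne
      exact ⟨x, hUfin.mem_toFinset.2 hx⟩
    have hu1 : 1 ≤ UF.card := Finset.card_pos.2 hUFne
    have hu2 : 2 * UF.card ≤ n := by
      have h1 : (UF.card : ℝ) ≤ (n:ℝ)/2 := by
        rw [hUcard] at hU2; exact_mod_cast hU2
      have h2 : ((2 * UF.card : ℕ) : ℝ) ≤ n := by push_cast; linarith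
      exact_mod_cast h2
    have hNS1 : 1 ≤ NS.card := by
      have hcompl : ∃ y, y ∉ UF := by
        by_contra hc
        push_neg at hc
        have h1 : (Finset.univ : Finset (Fin n)) ⊆ UF := fun y _ => hc y
        have h2 := Finset.card_le_card h1
        rw [Finset.card_univ, Fintype.card_fin] at h2
        omega
      obtain ⟨y, hy⟩ := hcompl
      obtain ⟨x0, hx0⟩ := hUFne
      obtain ⟨m, hchain⟩ := (hGconn.preconnected x0 y).reachIn_univ
      obtain ⟨z, -, hzU, u, hu, hadj⟩ := hchain.crossing (U := (↑UF : Set (Fin n)))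
        (by exact_mod_cast hx0) (by exact_mod_cast hy)
      have hzNS : z ∈ NS := mem_NBF.2 ⟨by exact_mod_cast hzU, u, by exact_mod_cast hu,
        Or.inl hadj⟩
      exact Finset.card_pos.2 ⟨z, hzNS⟩
    have hbadR : (NS.card : ℝ) < cc * UF.card := by
      rw [hNScard, hUcard] at hUbad
      exact_mod_cast hUbad
    -- the two families of pieces
    set A := Pn.filter (fun P => P ⊆ UF) with hAdef
    set B := Pn.filter (fun P => (P ∩ NG).Nonempty) with hBdef
    have hAP : A ⊆ Pn := Finset.filter_subset _ _
    have hBP : B ⊆ Pn := Finset.filter_subset _ _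
    have hASU : A.biUnion id ⊆ UF := by
      apply Finset.biUnion_subset.2
      intro P hP
      exact (Finset.mem_filter.1 hP).2
    have hcov : UF ⊆ A.biUnion id ∪ B.biUnion id := by
      intro x hx
      have hxuniv : x ∈ Pn.biUnion id := by rw [hPun]; exact Finset.mem_univ x
      obtain ⟨P, hPPn, hxP⟩ := Finset.mem_biUnion.1 hxuniv
      by_cases hPU : P ⊆ UF
      · exact Finset.mem_union_left _
          (Finset.mem_biUnion.2 ⟨P, Finset.mem_filter.2 ⟨hPPn, hPU⟩, hxP⟩)
      · obtain ⟨y, hyP, hyU⟩ := Finset.not_subset.1 hPU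
        have hPconn := (hPparts P hPPn).2.2.2
        obtain ⟨m, hchain⟩ := hPconn x (by exact_mod_cast hxP) y (by exact_mod_cast hyP)
        obtain ⟨z, hzP, hzU, u, hu, hadj⟩ := hchain.crossing (U := (↑UF : Set (Fin n)))
          (by exact_mod_cast hx) (by exact_mod_cast hyU)
        have hzNG : z ∈ NG := mem_NBF.2 ⟨by exact_mod_cast hzU, u, by exact_mod_cast hu, hadj⟩
        have hPB : P ∈ B := Finset.mem_filter.2 ⟨hPPn,
          ⟨z, Finset.mem_inter.2 ⟨by exact_mod_cast hzP, hzNG⟩⟩⟩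
        exact Finset.mem_union_right _ (Finset.mem_biUnion.2 ⟨P, hPB, hxP⟩)
    have hbNG : B.card ≤ NG.card := by
      apply Finset.card_le_card_of_injOn
        (fun P => if h : (P ∩ NG).Nonempty then h.choose else (⟨0, by omega⟩ : Fin n))
      · intro P hP
        have h := (Finset.mem_filter.1 hP).2
        simp only [dif_pos h]
        exact (Finset.mem_inter.1 h.choose_spec).2
      · intro P hP Q hQ hfPQ
        have hP2 := (Finset.mem_filter.1 (by exact_mod_cast hP : P ∈ B)).2
        have hQ2 := (Finset.mem_filter.1 (by exact_mod_cast hQ : Q ∈ B)).2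
        simp only [dif_pos hP2, dif_pos hQ2] at hfPQ
        by_contra hne
        have h1 : hP2.choose ∈ P := (Finset.mem_inter.1 hP2.choose_spec).1
        have h2 : hQ2.choose ∈ Q := (Finset.mem_inter.1 hQ2.choose_spec).1
        rw [hfPQ] at h1
        have hdisj := hPdisj P (hBP (by exact_mod_cast hP)) Q (hBP (by exact_mod_cast hQ)) hne
        exact Finset.disjoint_left.1 hdisj h1 h2
    -- real estimates about sizes
    have hbR : (B.card : ℝ) < cc * UF.card := by
      have h1 : (B.card : ℝ) ≤ NS.card := by
        exact_mod_cast le_trans hbNG (Finset.card_le_card hNGsub)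
      linarith
    have hUB : ((B.biUnion id).card : ℝ) ≤ 2*(Δ:ℝ)*k * B.card := by
      have h1 : (B.biUnion id).card ≤ ∑ P ∈ B, P.card := Finset.card_biUnion_le
      have h2 : ∑ P ∈ B, P.card ≤ B.card * (2*Δ*k) :=
        Finset.sum_le_card_nsmul _ _ _ (fun P hP => (hPsize P (hBP hP)).2)
      have h3 : ((B.biUnion id).card : ℝ) ≤ ((B.card * (2*Δ*k) : ℕ) : ℝ) := by
        exact_mod_cast le_trans h1 h2
      calc ((B.biUnion id).card : ℝ) ≤ ((B.card * (2*Δ*k) : ℕ) : ℝ) := h3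
        _ = 2*(Δ:ℝ)*k * B.card := by push_cast; ring
    have hUA : ((A.biUnion id).card : ℝ) ≤ 2*(Δ:ℝ)*k * A.card := by
      have h1 : (A.biUnion id).card ≤ ∑ P ∈ A, P.card := Finset.card_biUnion_le
      have h2 : ∑ P ∈ A, P.card ≤ A.card * (2*Δ*k) :=
        Finset.sum_le_card_nsmul _ _ _ (fun P hP => (hPsize P (hAP hP)).2)
      have h3 : ((A.biUnion id).card : ℝ) ≤ ((A.card * (2*Δ*k) : ℕ) : ℝ) := by
        exact_mod_cast le_trans h1 h2
      calc ((A.biUnion id).card : ℝ) ≤ ((A.card * (2*Δ*k) : ℕ) : ℝ) := h3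
        _ = 2*(Δ:ℝ)*k * A.card := by push_cast; ring
    have hΔk0 : (0:ℝ) ≤ 2*(Δ:ℝ)*k := by positivity
    have hUBu : ((B.biUnion id).card : ℝ) ≤ (UF.card:ℝ)/2 := by
      have h1 : ((B.biUnion id).card : ℝ) ≤ 2*(Δ:ℝ)*k * (cc * UF.card) :=
        hUB.trans (mul_le_mul_of_nonneg_left hbR.le hΔk0)
      have h2 : 2*(Δ:ℝ)*k * (cc * UF.card) = (cc * (4*(Δ:ℝ)*k)) * ((UF.card:ℝ)/2) := by ring
      have h3 : (cc * (4*(Δ:ℝ)*k)) * ((UF.card:ℝ)/2) ≤ 1 * ((UF.card:ℝ)/2) :=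
        mul_le_mul_of_nonneg_right hck (by positivity)
      rw [h2] at h1
      linarith
    have hsplit : (UF.card:ℝ) ≤ ((A.biUnion id).card:ℝ) + ((B.biUnion id).card:ℝ) := by
      have h1 : UF.card ≤ (A.biUnion id ∪ B.biUnion id).card := Finset.card_le_card hcov
      have h2 := Finset.card_union_le (A.biUnion id) (B.biUnion id)
      have h3 : UF.card ≤ (A.biUnion id).card + (B.biUnion id).card := le_trans h1 h2
      exact_mod_cast h3
    have hj1 : 1 ≤ A.card := by
      by_contra hc
      have hA0 : A.card = 0 := by omega
      have hAe : A = ∅ := Finset.card_eq_zero.1 hA0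
      rw [hAe] at hsplit
      simp only [Finset.biUnion_empty, Finset.card_empty, Nat.cast_zero, zero_add] at hsplit
      have : (UF.card:ℝ) ≤ (UF.card:ℝ)/2 := le_trans hsplit hUBu
      have hpos : (1:ℝ) ≤ UF.card := by exact_mod_cast hu1
      linarith
    have hccu : cc * UF.card ≤ ((A.card:ℝ) + B.card)/2 := by
      have h1 : (UF.card:ℝ) ≤ 2*(Δ:ℝ)*k * A.card + 2*(Δ:ℝ)*k * B.card := by linarith
      have h2 : cc * (UF.card:ℝ) ≤ cc * (2*(Δ:ℝ)*k * ((A.card:ℝ) + B.card)) := by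
        apply mul_le_mul_of_nonneg_left _ hccpos.le
        linarith
      have h3 : cc * (2*(Δ:ℝ)*k * ((A.card:ℝ) + B.card))
          = (cc * (4*(Δ:ℝ)*k)) * (((A.card:ℝ) + B.card)/2) := by ring
      have h4 : (cc * (4*(Δ:ℝ)*k)) * (((A.card:ℝ) + B.card)/2)
          ≤ 1 * (((A.card:ℝ) + B.card)/2) := by
        apply mul_le_mul_of_nonneg_right hck
        positivity
      rw [h3] at h2
      linarith
    have hbj : B.card ≤ A.card := by
      have h1 : (B.card:ℝ) < ((A.card:ℝ) + B.card)/2 := lt_of_lt_of_le hbR hccu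
      have h2 : (B.card:ℝ) < A.card := by linarith
      exact_mod_cast h2.le
    set Zl := (A ∪ B).biUnion id with hZldef
    have hZsplit : Zl = A.biUnion id ∪ B.biUnion id := by
      rw [hZldef]
      ext v
      simp only [Finset.mem_biUnion, Finset.mem_union, id]
      constructor
      · rintro ⟨P, hP | hP, hv⟩
        · exact Or.inl ⟨P, hP, hv⟩
        · exact Or.inr ⟨P, hP, hv⟩
      · rintro (⟨P, hP, hv⟩ | ⟨P, hP, hv⟩)
        · exact ⟨P, Or.inl hP, hv⟩
        · exact ⟨P, Or.inr hP, hv⟩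
    have hUFZ : UF ⊆ Zl := by rw [hZsplit]; exact hcov
    have hZcard : 4 * Zl.card ≤ 3 * n := by
      have h1 : (Zl.card:ℝ) ≤ ((A.biUnion id).card:ℝ) + ((B.biUnion id).card:ℝ) := by
        rw [hZsplit]
        exact_mod_cast Finset.card_union_le _ _
      have h2 : ((A.biUnion id).card:ℝ) ≤ UF.card := by
        exact_mod_cast Finset.card_le_card hASU
      have h3 : (Zl.card:ℝ) ≤ (3/2) * UF.card := by linarith
      have h4 : ((4 * Zl.card : ℕ):ℝ) ≤ ((3 * n : ℕ):ℝ) := by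
        push_cast
        have h5 : (2 * UF.card : ℝ) ≤ n := by exact_mod_cast hu2
        linarith
      exact_mod_cast h4
    have h2jk : 2 * (A.card * k) ≤ n := by
      have h1 : A.card * k ≤ (A.biUnion id).card := by
        have he : (A.biUnion id).card = ∑ P ∈ A, P.card :=
          Finset.card_biUnion (fun P hP Q hQ hne => hPdisj P (hAP hP) Q (hAP hQ) hne)
        have h2 : A.card * k ≤ ∑ P ∈ A, P.card := by
          simpa using Finset.card_nsmul_le_sum A (fun P => P.card) k
            (fun P hP => (hPsize P (hAP hP)).1)
        omega
      have h2 : (A.biUnion id).card ≤ UF.card := Finset.card_le_card hASU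
      omega
    -- the set Y of random neighbors of ⋃A outside Zl
    set Y := NBF R (A.biUnion id) \ Zl with hYdef
    have hYsub : Y ⊆ NS := by
      intro v hv
      obtain ⟨hv1, hv2⟩ := Finset.mem_sdiff.1 hv
      obtain ⟨hvS, s, hs, hadj⟩ := mem_NBF.1 hv1
      have hvU : v ∉ UF := fun h => hv2 (hUFZ h)
      exact mem_NBF.2 ⟨hvU, s, hASU hs, Or.inr hadj⟩
    have hYj : Y.card ≤ A.card := by
      have h1 : (Y.card:ℝ) ≤ NS.card := by exact_mod_cast Finset.card_le_card hYsub
      have h2 : (Y.card:ℝ) < ((A.card:ℝ) + B.card)/2 := lt_of_le_of_lt h1 (lt_of_lt_of_le hbadR hccu)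
      have h3 : (B.card:ℝ) ≤ A.card := by exact_mod_cast hbj
      have h4 : (Y.card:ℝ) < A.card + 1 := by linarith
      have h5 : Y.card < A.card + 1 := by exact_mod_cast h4
      omega
    -- extract W
    have hZuniv : Zl ⊆ Finset.univ := Finset.subset_univ _
    have hZcard2 : (Finset.univ \ Zl).card = n - Zl.card := by
      rw [Finset.card_sdiff_of_subset hZuniv, Finset.card_univ, Fintype.card_fin]
    have hCand : n - Zl.card - A.card ≤ ((Finset.univ \ Zl) \ Y).card := by
      have h1 := Finset.card_le_card_sdiff_add_card (s := Finset.univ \ Zl) (t := Y)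
      omega
    obtain ⟨W, hWsub, hWcard⟩ := Finset.exists_subset_card_eq hCand
    have hWZ : W ⊆ Finset.univ \ Zl := hWsub.trans Finset.sdiff_subset
    have hSZ : A.biUnion id ⊆ Zl := by
      rw [hZsplit]; exact Finset.subset_union_left
    have hdisjSW : Disjoint (A.biUnion id) W := by
      rw [Finset.disjoint_right]
      intro w hw hwS
      exact (Finset.mem_sdiff.1 (hWZ hw)).2 (hSZ hwS)
    refine ⟨(A, B, W), ⟨hAP, hBP, hj1, hbj, hWZ, ?_, hZcard, h2jk, hdisjSW⟩, ?_⟩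
    · exact hWcard
    · -- the event holds
      intro s hs w hw hadj
      have hwZ : w ∉ Zl := (Finset.mem_sdiff.1 (hWZ hw)).2
      have hwS : w ∉ A.biUnion id := fun h => hwZ (hSZ h)
      have hwN : w ∈ NBF R (A.biUnion id) := mem_NBF.2 ⟨hwS, s, hs, hadj⟩
      have hwY : w ∈ Y := Finset.mem_sdiff.2 ⟨hwN, hwZ⟩
      exact (Finset.mem_sdiff.1 (hWsub hw)).2 hwY
  -- ======== assembly ========
  have h1n : (1:ℝ)/n ≤ η := by
    have h0 : ⌈1/η⌉₊ + 1 ≤ n := le_trans (le_max_right _ _) hn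
    have h1 : (1/η : ℝ) ≤ ⌈1/η⌉₊ := Nat.le_ceil _
    have h2 : ((⌈1/η⌉₊ : ℕ):ℝ) + 1 ≤ n := by exact_mod_cast h0
    have h3 : 1/η ≤ (n:ℝ) := by linarith
    calc (1:ℝ)/n ≤ 1/(1/η) := one_div_le_one_div_of_le (by positivity) h3
      _ = η := one_div_one_div η
  have main : ∀ A : Set (SimpleGraph (Fin n)),
      (∀ R, R ∉ A → ∃ x, IdxP n k Pn x ∧ R ∈ EV n x) →
      1 - η ≤ erProb n ((n:ℝ)^(-a)/n) A := by
    intro A hA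
    have hsub : Aᶜ ⊆ ⋃ x ∈ Idx, EV n x := by
      intro R hR
      obtain ⟨x, hx1, hx2⟩ := hA R hR
      exact Set.mem_iUnion₂.2 ⟨x, Finset.mem_filter.2 ⟨Finset.mem_univ x, hx1⟩, hx2⟩
    have hmapsto : ∀ x ∈ Idx, x.1.card ∈ Finset.Icc 1 n := by
      intro x hx
      have hP := (Finset.mem_filter.1 hx).2
      exact Finset.mem_Icc.2 ⟨hP.2.2.1, le_trans (Finset.card_le_card hP.1) hM⟩
    have htail : ∑ x ∈ Idx, erProb n ((n:ℝ)^(-a)/n) (EV n x) ≤ 1/(n:ℝ) := by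
      have hfib := Finset.sum_fiberwise_of_maps_to hmapsto
        (fun x => erProb n ((n:ℝ)^(-a)/n) (EV n x))
      rw [← hfib]
      have hinner : ∀ j ∈ Finset.Icc 1 n,
          ∑ x ∈ Idx.filter (fun x => x.1.card = j), erProb n ((n:ℝ)^(-a)/n) (EV n x)
            ≤ (1/(n:ℝ)) * (1/2)^j := by
        intro j hj
        obtain ⟨hj1, hjn⟩ := Finset.mem_Icc.1 hj
        have hstep1 : ∑ x ∈ Idx.filter (fun x => x.1.card = j),
            erProb n ((n:ℝ)^(-a)/n) (EV n x)
            ≤ ∑ _x ∈ Idx.filter (fun x => x.1.card = j), ((n:ℝ)^(8*j))⁻¹ := by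
          apply Finset.sum_le_sum
          intro x hx
          obtain ⟨hxI, hxj⟩ := Finset.mem_filter.1 hx
          have := probEV x (Finset.mem_filter.1 hxI).2
          rwa [hxj] at this
        have hstep2 : ∑ _x ∈ Idx.filter (fun x => x.1.card = j), ((n:ℝ)^(8*j))⁻¹
            = ((Idx.filter (fun x => x.1.card = j)).card : ℝ) * ((n:ℝ)^(8*j))⁻¹ := by
          rw [Finset.sum_const, nsmul_eq_mul]
        have hstep3 : ((Idx.filter (fun x => x.1.card = j)).card : ℝ) * ((n:ℝ)^(8*j))⁻¹
            ≤ ((n:ℝ)^(4*j)) * ((n:ℝ)^(8*j))⁻¹ := by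
          apply mul_le_mul_of_nonneg_right _ (by positivity)
          have := countj j hj1
          calc ((Idx.filter (fun x => x.1.card = j)).card : ℝ) ≤ ((n^(4*j) : ℕ) : ℝ) := by
                exact_mod_cast this
            _ = (n:ℝ)^(4*j) := by push_cast; ring
        have hstep4 : ((n:ℝ)^(4*j)) * ((n:ℝ)^(8*j))⁻¹ = ((n:ℝ)^(4*j))⁻¹ := by
          rw [show 8*j = 4*j + 4*j from by ring, pow_add]
          field_simp
        have hstep5 : ((n:ℝ)^(4*j))⁻¹ ≤ (1/(n:ℝ)) * (1/2)^j := by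
          have h1 : (n:ℝ)*(2:ℝ)^j ≤ (n:ℝ)^(4*j) := by
            have h2 : (n:ℝ)^(j+1) ≤ (n:ℝ)^(4*j) :=
              pow_le_pow_right₀ hn1 (by omega)
            have h3 : (n:ℝ)*(2:ℝ)^j ≤ (n:ℝ)^(j+1) := by
              rw [pow_succ, mul_comm ((n:ℝ)^j) (n:ℝ)]
              apply mul_le_mul_of_nonneg_left _ hnpos.le
              exact pow_le_pow_left₀ (by norm_num) hn2 j
            linarith
          have h4 : (0:ℝ) < (n:ℝ)*(2:ℝ)^j := by positivity
          have h5 : ((n:ℝ)^(4*j))⁻¹ ≤ ((n:ℝ)*(2:ℝ)^j)⁻¹ := by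
            apply inv_anti₀ h4 h1
          calc ((n:ℝ)^(4*j))⁻¹ ≤ ((n:ℝ)*(2:ℝ)^j)⁻¹ := h5
            _ = (1/(n:ℝ)) * (1/2)^j := by
              rw [mul_inv, one_div, one_div, inv_pow]
        calc ∑ x ∈ Idx.filter (fun x => x.1.card = j), erProb n ((n:ℝ)^(-a)/n) (EV n x)
            ≤ ∑ _x ∈ Idx.filter (fun x => x.1.card = j), ((n:ℝ)^(8*j))⁻¹ := hstep1
          _ = ((Idx.filter (fun x => x.1.card = j)).card : ℝ) * ((n:ℝ)^(8*j))⁻¹ := hstep2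
          _ ≤ ((n:ℝ)^(4*j)) * ((n:ℝ)^(8*j))⁻¹ := hstep3
          _ = ((n:ℝ)^(4*j))⁻¹ := hstep4
          _ ≤ (1/(n:ℝ)) * (1/2)^j := hstep5
      calc ∑ j ∈ Finset.Icc 1 n, ∑ x ∈ Idx.filter (fun x => x.1.card = j),
            erProb n ((n:ℝ)^(-a)/n) (EV n x)
          ≤ ∑ j ∈ Finset.Icc 1 n, (1/(n:ℝ)) * (1/2)^j := Finset.sum_le_sum hinner
        _ = (1/(n:ℝ)) * ∑ j ∈ Finset.Icc 1 n, (1/2)^j := by rw [Finset.mul_sum]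
        _ ≤ (1/(n:ℝ)) * 1 := by
            apply mul_le_mul_of_nonneg_left (sum_halves n) (by positivity)
        _ = 1/(n:ℝ) := mul_one _
    have hout : erProb n ((n:ℝ)^(-a)/n) Aᶜ ≤ 1/(n:ℝ) := by
      calc erProb n ((n:ℝ)^(-a)/n) Aᶜ ≤ erProb n ((n:ℝ)^(-a)/n) (⋃ x ∈ Idx, EV n x) :=
            erProb_mono hp0 hp1 hsub
        _ ≤ ∑ x ∈ Idx, erProb n ((n:ℝ)^(-a)/n) (EV n x) := erProb_biUnion_le hp0 hp1 Idx _
        _ ≤ 1/(n:ℝ) := htail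
    have hcompl := erProb_compl (n := n) ((n:ℝ)^(-a)/n) A
    linarith
  apply main
  intro R hR
  simp only [Set.mem_setOf_eq] at hR
  push_neg at hR
  obtain ⟨U, hUne, hUcard, hlt⟩ := hR
  exact cover R ⟨U, hUne, hUcard, hlt⟩

end Main
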